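/- Let P' = {p, q, r, e} be the four-element projection algebra whose operations are: θ_p is the constant map with value p, θ_q is the constant map with value q, θ_r is the constant map with value r, and θ_e is given by pθ_e = p, qθ_e = q, rθ_e = q, eθ_e = e. (These operations satisfy the projection algebra axioms (P1)–(P5).) Then the quotient of the free semigroup on X_{P'} = {x_s : s ∈ P'} by the congruence generated by the relations x_s² = x_s, (x_s x_t)² = x_s x_t, and x_s x_t x_s = x_{tθ_s} for all s, t ∈ P' has exactly 10 elements. -/

import Mathlib

structure ProjectionAlgebra (P : Type*) where
  th : P → P → P
  P1 : ∀ p, th p p = p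
  P2 : ∀ p q, th p (th p q) = th p q
  P3 : ∀ p q, th p (th q p) = th p q
  P4 : ∀ p q r, th p (th q (th p r)) = th (th p q) r
  P5 : ∀ p q r, th q (th p (th q (th p r))) = th q (th p r)

namespace ProjectionAlgebra

variable {P : Type*} (A : ProjectionAlgebra P)

/-- `p ≤ q` iff `p = pθ_q`. -/
def le (p q : P) : Prop := p = A.th q p

/-- `p ≤F q` iff `p = qθ_p`. -/
def leF (p q : P) : Prop := p = A.th p q

/-- `p F q` iff `p ≤F q` and `q ≤F p`. -/
def Frel (p q : P) : Prop := A.leF p q ∧ A.leF q p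

/-- `(e, f)` is a `p`-linked pair: `f = eθ_pθ_f` and `e = fθ_pθ_e`. -/
def Linked (p e f : P) : Prop :=
  f = A.th f (A.th p e) ∧ e = A.th e (A.th p f)

/-- `q θ_{p₁} ⋯ θ_{p_k}` for the list `ps = [p₁, …, p_k]`. -/
def applyList (q : P) (ps : List P) : P := ps.foldl (fun x p => A.th p x) q

end ProjectionAlgebra

/-- The defining relations of the free projection-generated regular *-semigroup
`PG(P)`: `x_p² = x_p`, `(x_p x_q)² = x_p x_q`, and `x_p x_q x_p = x_{qθ_p}`,
for `p, q ∈ P`, as a binary relation on the free semigroup over `P`. -/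
def PGrel {P : Type*} (A : ProjectionAlgebra P) :
    FreeSemigroup P → FreeSemigroup P → Prop := fun u v =>
  (∃ p : P, u = FreeSemigroup.of p * FreeSemigroup.of p ∧ v = FreeSemigroup.of p) ∨
  (∃ p q : P, u = (FreeSemigroup.of p * FreeSemigroup.of q) *
      (FreeSemigroup.of p * FreeSemigroup.of q) ∧
    v = FreeSemigroup.of p * FreeSemigroup.of q) ∨
  (∃ p q : P, u = FreeSemigroup.of p * FreeSemigroup.of q * FreeSemigroup.of p ∧
    v = FreeSemigroup.of (A.th p q))

/-- The word `x_h x_{t₁} ⋯ x_{t_m}` in the free semigroup. -/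
def word1 {P : Type*} (h : P) (t : List P) : FreeSemigroup P :=
  t.foldl (fun w p => w * FreeSemigroup.of p) (FreeSemigroup.of h)

/-- The reversed word `x_{t_m} ⋯ x_{t₁} x_h` in the free semigroup. -/
def word1r {P : Type*} (h : P) (t : List P) : FreeSemigroup P :=
  t.foldl (fun w p => FreeSemigroup.of p * w) (FreeSemigroup.of h)

/-- The four-element carrier `{p, q, r, e}` of Kinyon's projection algebra. -/
inductive K : Type
  | p | q | r | e
deriving DecidableEq

instance : Fintype K :=
  ⟨⟨↑[K.p, K.q, K.r, K.e], by decide⟩, fun x => by cases x <;> decide⟩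

/-- The operations of Kinyon's projection algebra: `kth s t = tθ_s`, where `θ_p, θ_q,
θ_r` are the constant maps with values `p, q, r`, and `pθ_e = p`, `qθ_e = q`,
`rθ_e = q`, `eθ_e = e`. -/
def kth : K → K → K
  | K.p, _ => K.p
  | K.q, _ => K.q
  | K.r, _ => K.r
  | K.e, K.p => K.p
  | K.e, K.q => K.q
  | K.e, K.r => K.q
  | K.e, K.e => K.e

/-- These operations satisfy the projection algebra axioms (P1)–(P5). -/
def KinyonAlgebra : ProjectionAlgebra K where
  th := kth
  P1 := by decide
  P2 := by decide
  P3 := by decide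
  P4 := by decide
  P5 := by decide


section Stmt17Aux

open FreeSemigroup

/-- `10`-element carrier for the quotient semigroup: the elements correspond to the
words `e, p, q, r, er, pq, pr, qp, re, rp`. -/
inductive S10 : Type
  | s0 | s1 | s2 | s3 | s4 | s5 | s6 | s7 | s8 | s9
deriving DecidableEq

instance : Fintype S10 :=
  ⟨⟨↑[S10.s0, S10.s1, S10.s2, S10.s3, S10.s4, S10.s5, S10.s6, S10.s7, S10.s8, S10.s9], by decide⟩, fun x => by cases x <;> decide⟩

def smul : S10 → S10 → S10
  | .s0, .s0 => .s0
  | .s0, .s1 => .s1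
  | .s0, .s2 => .s2
  | .s0, .s3 => .s4
  | .s0, .s4 => .s4
  | .s0, .s5 => .s5
  | .s0, .s6 => .s6
  | .s0, .s7 => .s7
  | .s0, .s8 => .s2
  | .s0, .s9 => .s7
  | .s1, .s0 => .s1
  | .s1, .s1 => .s1
  | .s1, .s2 => .s5
  | .s1, .s3 => .s6
  | .s1, .s4 => .s6
  | .s1, .s5 => .s5
  | .s1, .s6 => .s6
  | .s1, .s7 => .s1
  | .s1, .s8 => .s5
  | .s1, .s9 => .s1
  | .s2, .s0 => .s2
  | .s2, .s1 => .s7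
  | .s2, .s2 => .s2
  | .s2, .s3 => .s4
  | .s2, .s4 => .s4
  | .s2, .s5 => .s2
  | .s2, .s6 => .s4
  | .s2, .s7 => .s7
  | .s2, .s8 => .s2
  | .s2, .s9 => .s7
  | .s3, .s0 => .s8
  | .s3, .s1 => .s9
  | .s3, .s2 => .s8
  | .s3, .s3 => .s3
  | .s3, .s4 => .s3
  | .s3, .s5 => .s8
  | .s3, .s6 => .s3
  | .s3, .s7 => .s9
  | .s3, .s8 => .s8
  | .s3, .s9 => .s9
  | .s4, .s0 => .s2
  | .s4, .s1 => .s7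
  | .s4, .s2 => .s2
  | .s4, .s3 => .s4
  | .s4, .s4 => .s4
  | .s4, .s5 => .s2
  | .s4, .s6 => .s4
  | .s4, .s7 => .s7
  | .s4, .s8 => .s2
  | .s4, .s9 => .s7
  | .s5, .s0 => .s5
  | .s5, .s1 => .s1
  | .s5, .s2 => .s5
  | .s5, .s3 => .s6
  | .s5, .s4 => .s6
  | .s5, .s5 => .s5
  | .s5, .s6 => .s6
  | .s5, .s7 => .s1
  | .s5, .s8 => .s5
  | .s5, .s9 => .s1
  | .s6, .s0 => .s5
  | .s6, .s1 => .s1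
  | .s6, .s2 => .s5
  | .s6, .s3 => .s6
  | .s6, .s4 => .s6
  | .s6, .s5 => .s5
  | .s6, .s6 => .s6
  | .s6, .s7 => .s1
  | .s6, .s8 => .s5
  | .s6, .s9 => .s1
  | .s7, .s0 => .s7
  | .s7, .s1 => .s7
  | .s7, .s2 => .s2
  | .s7, .s3 => .s4
  | .s7, .s4 => .s4
  | .s7, .s5 => .s2
  | .s7, .s6 => .s4
  | .s7, .s7 => .s7
  | .s7, .s8 => .s2
  | .s7, .s9 => .s7
  | .s8, .s0 => .s8
  | .s8, .s1 => .s9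
  | .s8, .s2 => .s8
  | .s8, .s3 => .s3
  | .s8, .s4 => .s3
  | .s8, .s5 => .s8
  | .s8, .s6 => .s3
  | .s8, .s7 => .s9
  | .s8, .s8 => .s8
  | .s8, .s9 => .s9
  | .s9, .s0 => .s9
  | .s9, .s1 => .s9
  | .s9, .s2 => .s8
  | .s9, .s3 => .s3
  | .s9, .s4 => .s3
  | .s9, .s5 => .s8
  | .s9, .s6 => .s3
  | .s9, .s7 => .s9
  | .s9, .s8 => .s8
  | .s9, .s9 => .s9

instance : Mul S10 := ⟨smul⟩

instance : Semigroup S10 := ⟨by decide⟩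

def sgen : K → S10
  | K.p => .s1
  | K.q => .s2
  | K.r => .s3
  | K.e => .s0

def fS : FreeSemigroup K →ₙ* S10 := FreeSemigroup.lift sgen

abbrev o : K → FreeSemigroup K := FreeSemigroup.of

abbrev cK : Con (FreeSemigroup K) := conGen (PGrel KinyonAlgebra)

lemma bsq (s : K) : cK (o s * o s) (o s) :=
  ConGen.Rel.of _ _ (Or.inl ⟨s, rfl, rfl⟩)

lemma bsq2 (s t : K) : cK ((o s * o t) * (o s * o t)) (o s * o t) :=
  ConGen.Rel.of _ _ (Or.inr (Or.inl ⟨s, t, rfl, rfl⟩))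

lemma btri (s t : K) : cK (o s * o t * o s) (o (kth s t)) :=
  ConGen.Rel.of _ _ (Or.inr (Or.inr ⟨s, t, rfl, rfl⟩))

lemma lem_p_e : cK (o K.p * o K.e) (o K.p) := by
  have h0 : cK (o K.p * o K.e) (o K.p * (o K.e * (o K.p * o K.e))) := by simpa [kth, mul_assoc] using cK.symm (bsq2 K.p K.e)
  have h1 : cK (o K.p * (o K.e * (o K.p * o K.e))) (o K.p * o K.p) := by simpa [kth, mul_assoc] using cK.mul (cK.refl (o K.p)) ((btri K.e K.p))
  have h2 : cK (o K.p * o K.p) (o K.p) := by simpa [kth, mul_assoc] using (bsq K.p)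
  exact ((h0).trans h1).trans h2

lemma lem_p_p : cK (o K.p * o K.p) (o K.p) := by
  have h0 : cK (o K.p * o K.p) (o K.p) := by simpa [kth, mul_assoc] using (bsq K.p)
  exact h0

lemma lem_p_q : cK (o K.p * o K.q) (o K.p * o K.q) := cK.refl _

lemma lem_p_r : cK (o K.p * o K.r) (o K.p * o K.r) := cK.refl _

lemma lem_p_er : cK (o K.p * (o K.e * o K.r)) (o K.p * o K.r) := by
  have h0 : cK (o K.p * (o K.e * o K.r)) (o K.p * (o K.e * (o K.p * (o K.e * o K.r)))) := by simpa [kth, mul_assoc] using cK.mul ((bsq2 K.p K.e).symm) (cK.refl (o K.r))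
  have h1 : cK (o K.p * (o K.e * (o K.p * (o K.e * o K.r)))) (o K.p * (o K.p * o K.r)) := by simpa [kth, mul_assoc] using cK.mul (cK.mul (cK.refl (o K.p)) ((btri K.e K.p))) (cK.refl (o K.r))
  have h2 : cK (o K.p * (o K.p * o K.r)) (o K.p * o K.r) := by simpa [kth, mul_assoc] using cK.mul ((bsq K.p)) (cK.refl (o K.r))
  exact ((h0).trans h1).trans h2

lemma lem_p_pq : cK (o K.p * (o K.p * o K.q)) (o K.p * o K.q) := by
  have h0 : cK (o K.p * (o K.p * o K.q)) (o K.p * o K.q) := by simpa [kth, mul_assoc] using cK.mul ((bsq K.p)) (cK.refl (o K.q))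
  exact h0

lemma lem_p_pr : cK (o K.p * (o K.p * o K.r)) (o K.p * o K.r) := by
  have h0 : cK (o K.p * (o K.p * o K.r)) (o K.p * o K.r) := by simpa [kth, mul_assoc] using cK.mul ((bsq K.p)) (cK.refl (o K.r))
  exact h0

lemma lem_p_qp : cK (o K.p * (o K.q * o K.p)) (o K.p) := by
  have h0 : cK (o K.p * (o K.q * o K.p)) (o K.p) := by simpa [kth, mul_assoc] using (btri K.p K.q)
  exact h0

lemma lem_p_re : cK (o K.p * (o K.r * o K.e)) (o K.p * o K.q) := by
  have h0 : cK (o K.p * (o K.r * o K.e)) (o K.p * (o K.p * (o K.r * o K.e))) := by simpa [kth, mul_assoc] using cK.mul ((bsq K.p).symm) (cK.refl (o K.r * o K.e))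
  have h1 : cK (o K.p * (o K.p * (o K.r * o K.e))) (o K.p * (o K.e * (o K.p * (o K.e * (o K.r * o K.e))))) := by simpa [kth, mul_assoc] using cK.mul (cK.mul (cK.refl (o K.p)) ((btri K.e K.p).symm)) (cK.refl (o K.r * o K.e))
  have h2 : cK (o K.p * (o K.e * (o K.p * (o K.e * (o K.r * o K.e))))) (o K.p * (o K.e * (o K.r * o K.e))) := by simpa [kth, mul_assoc] using cK.mul ((bsq2 K.p K.e)) (cK.refl (o K.r * o K.e))
  have h3 : cK (o K.p * (o K.e * (o K.r * o K.e))) (o K.p * o K.q) := by simpa [kth, mul_assoc] using cK.mul (cK.refl (o K.p)) ((btri K.e K.r))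
  exact (((h0).trans h1).trans h2).trans h3

lemma lem_p_rp : cK (o K.p * (o K.r * o K.p)) (o K.p) := by
  have h0 : cK (o K.p * (o K.r * o K.p)) (o K.p) := by simpa [kth, mul_assoc] using (btri K.p K.r)
  exact h0

lemma lem_q_e : cK (o K.q * o K.e) (o K.q) := by
  have h0 : cK (o K.q * o K.e) (o K.q * (o K.e * (o K.q * o K.e))) := by simpa [kth, mul_assoc] using cK.symm (bsq2 K.q K.e)
  have h1 : cK (o K.q * (o K.e * (o K.q * o K.e))) (o K.q * o K.q) := by simpa [kth, mul_assoc] using cK.mul (cK.refl (o K.q)) ((btri K.e K.q))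
  have h2 : cK (o K.q * o K.q) (o K.q) := by simpa [kth, mul_assoc] using (bsq K.q)
  exact ((h0).trans h1).trans h2

lemma lem_q_p : cK (o K.q * o K.p) (o K.q * o K.p) := cK.refl _

lemma lem_q_q : cK (o K.q * o K.q) (o K.q) := by
  have h0 : cK (o K.q * o K.q) (o K.q) := by simpa [kth, mul_assoc] using (bsq K.q)
  exact h0

lemma lem_q_r : cK (o K.q * o K.r) (o K.e * o K.r) := by
  have h0 : cK (o K.q * o K.r) (o K.e * (o K.r * (o K.e * o K.r))) := by simpa [kth, mul_assoc] using cK.mul ((btri K.e K.r).symm) (cK.refl (o K.r))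
  have h1 : cK (o K.e * (o K.r * (o K.e * o K.r))) (o K.e * o K.r) := by simpa [kth, mul_assoc] using cK.mul (cK.refl (o K.e)) ((btri K.r K.e))
  exact (h0).trans h1

lemma lem_q_er : cK (o K.q * (o K.e * o K.r)) (o K.e * o K.r) := by
  have h0 : cK (o K.q * (o K.e * o K.r)) (o K.e * (o K.r * (o K.e * (o K.e * o K.r)))) := by simpa [kth, mul_assoc] using cK.mul ((btri K.e K.r).symm) (cK.refl (o K.e * o K.r))
  have h1 : cK (o K.e * (o K.r * (o K.e * (o K.e * o K.r)))) (o K.e * (o K.r * (o K.e * o K.r))) := by simpa [kth, mul_assoc] using cK.mul (cK.mul (cK.refl (o K.e * o K.r)) ((bsq K.e))) (cK.refl (o K.r))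
  have h2 : cK (o K.e * (o K.r * (o K.e * o K.r))) (o K.e * o K.r) := by simpa [kth, mul_assoc] using cK.mul (cK.refl (o K.e)) ((btri K.r K.e))
  exact ((h0).trans h1).trans h2

lemma lem_q_pq : cK (o K.q * (o K.p * o K.q)) (o K.q) := by
  have h0 : cK (o K.q * (o K.p * o K.q)) (o K.q) := by simpa [kth, mul_assoc] using (btri K.q K.p)
  exact h0

lemma lem_q_pr : cK (o K.q * (o K.p * o K.r)) (o K.e * o K.r) := by
  have h0 : cK (o K.q * (o K.p * o K.r)) (o K.q * (o K.p * (o K.e * (o K.p * o K.r)))) := by simpa [kth, mul_assoc] using cK.mul (cK.mul (cK.refl (o K.q)) ((btri K.p K.e).symm)) (cK.refl (o K.r))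
  have h1 : cK (o K.q * (o K.p * (o K.e * (o K.p * o K.r)))) (o K.e * (o K.r * (o K.e * (o K.p * (o K.e * (o K.p * o K.r)))))) := by simpa [kth, mul_assoc] using cK.mul ((btri K.e K.r).symm) (cK.refl (o K.p * (o K.e * (o K.p * o K.r))))
  have h2 : cK (o K.e * (o K.r * (o K.e * (o K.p * (o K.e * (o K.p * o K.r)))))) (o K.e * (o K.r * (o K.p * (o K.p * o K.r)))) := by simpa [kth, mul_assoc] using cK.mul (cK.mul (cK.refl (o K.e * o K.r)) ((btri K.e K.p))) (cK.refl (o K.p * o K.r))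
  have h3 : cK (o K.e * (o K.r * (o K.p * (o K.p * o K.r)))) (o K.e * (o K.r * (o K.p * o K.r))) := by simpa [kth, mul_assoc] using cK.mul (cK.mul (cK.refl (o K.e * o K.r)) ((bsq K.p))) (cK.refl (o K.r))
  have h4 : cK (o K.e * (o K.r * (o K.p * o K.r))) (o K.e * o K.r) := by simpa [kth, mul_assoc] using cK.mul (cK.refl (o K.e)) ((btri K.r K.p))
  exact ((((h0).trans h1).trans h2).trans h3).trans h4

lemma lem_q_qp : cK (o K.q * (o K.q * o K.p)) (o K.q * o K.p) := by
  have h0 : cK (o K.q * (o K.q * o K.p)) (o K.q * o K.p) := by simpa [kth, mul_assoc] using cK.mul ((bsq K.q)) (cK.refl (o K.p))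
  exact h0

lemma lem_q_re : cK (o K.q * (o K.r * o K.e)) (o K.q) := by
  have h0 : cK (o K.q * (o K.r * o K.e)) (o K.q * (o K.r * (o K.e * (o K.r * o K.e)))) := by simpa [kth, mul_assoc] using cK.mul (cK.refl (o K.q)) ((bsq2 K.r K.e).symm)
  have h1 : cK (o K.q * (o K.r * (o K.e * (o K.r * o K.e)))) (o K.q * (o K.r * o K.q)) := by simpa [kth, mul_assoc] using cK.mul (cK.refl (o K.q * o K.r)) ((btri K.e K.r))
  have h2 : cK (o K.q * (o K.r * o K.q)) (o K.q) := by simpa [kth, mul_assoc] using (btri K.q K.r)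
  exact ((h0).trans h1).trans h2

lemma lem_q_rp : cK (o K.q * (o K.r * o K.p)) (o K.q * o K.p) := by
  have h0 : cK (o K.q * (o K.r * o K.p)) (o K.q * (o K.r * (o K.p * o K.p))) := by simpa [kth, mul_assoc] using cK.mul (cK.refl (o K.q * o K.r)) ((bsq K.p).symm)
  have h1 : cK (o K.q * (o K.r * (o K.p * o K.p))) (o K.q * (o K.r * (o K.e * (o K.p * (o K.e * o K.p))))) := by simpa [kth, mul_assoc] using cK.mul (cK.mul (cK.refl (o K.q * o K.r)) ((btri K.e K.p).symm)) (cK.refl (o K.p))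
  have h2 : cK (o K.q * (o K.r * (o K.e * (o K.p * (o K.e * o K.p))))) (o K.q * (o K.r * (o K.e * o K.p))) := by simpa [kth, mul_assoc] using cK.mul (cK.refl (o K.q * (o K.r * o K.e))) ((btri K.p K.e))
  have h3 : cK (o K.q * (o K.r * (o K.e * o K.p))) (o K.q * (o K.r * (o K.e * (o K.r * (o K.e * o K.p))))) := by simpa [kth, mul_assoc] using cK.mul (cK.mul (cK.refl (o K.q)) ((bsq2 K.r K.e).symm)) (cK.refl (o K.p))
  have h4 : cK (o K.q * (o K.r * (o K.e * (o K.r * (o K.e * o K.p))))) (o K.q * (o K.r * (o K.q * o K.p))) := by simpa [kth, mul_assoc] using cK.mul (cK.mul (cK.refl (o K.q * o K.r)) ((btri K.e K.r))) (cK.refl (o K.p))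
  have h5 : cK (o K.q * (o K.r * (o K.q * o K.p))) (o K.q * o K.p) := by simpa [kth, mul_assoc] using cK.mul ((btri K.q K.r)) (cK.refl (o K.p))
  exact (((((h0).trans h1).trans h2).trans h3).trans h4).trans h5

lemma lem_r_e : cK (o K.r * o K.e) (o K.r * o K.e) := cK.refl _

lemma lem_r_p : cK (o K.r * o K.p) (o K.r * o K.p) := cK.refl _

lemma lem_r_q : cK (o K.r * o K.q) (o K.r * o K.e) := by
  have h0 : cK (o K.r * o K.q) (o K.r * (o K.e * (o K.r * o K.e))) := by simpa [kth, mul_assoc] using cK.mul (cK.refl (o K.r)) ((btri K.e K.r).symm)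
  have h1 : cK (o K.r * (o K.e * (o K.r * o K.e))) (o K.r * o K.e) := by simpa [kth, mul_assoc] using (bsq2 K.r K.e)
  exact (h0).trans h1

lemma lem_r_r : cK (o K.r * o K.r) (o K.r) := by
  have h0 : cK (o K.r * o K.r) (o K.r) := by simpa [kth, mul_assoc] using (bsq K.r)
  exact h0

lemma lem_r_er : cK (o K.r * (o K.e * o K.r)) (o K.r) := by
  have h0 : cK (o K.r * (o K.e * o K.r)) (o K.r) := by simpa [kth, mul_assoc] using (btri K.r K.e)
  exact h0

lemma lem_r_pq : cK (o K.r * (o K.p * o K.q)) (o K.r * o K.e) := by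
  have h0 : cK (o K.r * (o K.p * o K.q)) (o K.r * (o K.p * (o K.e * (o K.p * o K.q)))) := by simpa [kth, mul_assoc] using cK.mul (cK.mul (cK.refl (o K.r)) ((btri K.p K.e).symm)) (cK.refl (o K.q))
  have h1 : cK (o K.r * (o K.p * (o K.e * (o K.p * o K.q)))) (o K.r * (o K.p * (o K.e * (o K.p * (o K.e * (o K.r * o K.e)))))) := by simpa [kth, mul_assoc] using cK.mul (cK.refl (o K.r * (o K.p * (o K.e * o K.p)))) ((btri K.e K.r).symm)
  have h2 : cK (o K.r * (o K.p * (o K.e * (o K.p * (o K.e * (o K.r * o K.e)))))) (o K.r * (o K.p * (o K.p * (o K.r * o K.e)))) := by simpa [kth, mul_assoc] using cK.mul (cK.mul (cK.refl (o K.r * o K.p)) ((btri K.e K.p))) (cK.refl (o K.r * o K.e))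
  have h3 : cK (o K.r * (o K.p * (o K.p * (o K.r * o K.e)))) (o K.r * (o K.p * (o K.r * o K.e))) := by simpa [kth, mul_assoc] using cK.mul (cK.mul (cK.refl (o K.r)) ((bsq K.p))) (cK.refl (o K.r * o K.e))
  have h4 : cK (o K.r * (o K.p * (o K.r * o K.e))) (o K.r * o K.e) := by simpa [kth, mul_assoc] using cK.mul ((btri K.r K.p)) (cK.refl (o K.e))
  exact ((((h0).trans h1).trans h2).trans h3).trans h4

lemma lem_r_pr : cK (o K.r * (o K.p * o K.r)) (o K.r) := by
  have h0 : cK (o K.r * (o K.p * o K.r)) (o K.r) := by simpa [kth, mul_assoc] using (btri K.r K.p)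
  exact h0

lemma lem_r_qp : cK (o K.r * (o K.q * o K.p)) (o K.r * o K.p) := by
  have h0 : cK (o K.r * (o K.q * o K.p)) (o K.r * (o K.q * (o K.p * (o K.e * o K.p)))) := by simpa [kth, mul_assoc] using cK.mul (cK.refl (o K.r * o K.q)) ((btri K.p K.e).symm)
  have h1 : cK (o K.r * (o K.q * (o K.p * (o K.e * o K.p)))) (o K.r * (o K.e * (o K.r * (o K.e * (o K.p * (o K.e * o K.p)))))) := by simpa [kth, mul_assoc] using cK.mul (cK.mul (cK.refl (o K.r)) ((btri K.e K.r).symm)) (cK.refl (o K.p * (o K.e * o K.p)))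
  have h2 : cK (o K.r * (o K.e * (o K.r * (o K.e * (o K.p * (o K.e * o K.p)))))) (o K.r * (o K.e * (o K.p * (o K.e * o K.p)))) := by simpa [kth, mul_assoc] using cK.mul ((bsq2 K.r K.e)) (cK.refl (o K.p * (o K.e * o K.p)))
  have h3 : cK (o K.r * (o K.e * (o K.p * (o K.e * o K.p)))) (o K.r * (o K.p * o K.p)) := by simpa [kth, mul_assoc] using cK.mul (cK.mul (cK.refl (o K.r)) ((btri K.e K.p))) (cK.refl (o K.p))
  have h4 : cK (o K.r * (o K.p * o K.p)) (o K.r * o K.p) := by simpa [kth, mul_assoc] using cK.mul (cK.refl (o K.r)) ((bsq K.p))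
  exact ((((h0).trans h1).trans h2).trans h3).trans h4

lemma lem_r_re : cK (o K.r * (o K.r * o K.e)) (o K.r * o K.e) := by
  have h0 : cK (o K.r * (o K.r * o K.e)) (o K.r * o K.e) := by simpa [kth, mul_assoc] using cK.mul ((bsq K.r)) (cK.refl (o K.e))
  exact h0

lemma lem_r_rp : cK (o K.r * (o K.r * o K.p)) (o K.r * o K.p) := by
  have h0 : cK (o K.r * (o K.r * o K.p)) (o K.r * o K.p) := by simpa [kth, mul_assoc] using cK.mul ((bsq K.r)) (cK.refl (o K.p))
  exact h0

lemma lem_e_e : cK (o K.e * o K.e) (o K.e) := by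
  have h0 : cK (o K.e * o K.e) (o K.e) := by simpa [kth, mul_assoc] using (bsq K.e)
  exact h0

lemma lem_e_p : cK (o K.e * o K.p) (o K.p) := by
  have h0 : cK (o K.e * o K.p) (o K.e * (o K.p * (o K.e * o K.p))) := by simpa [kth, mul_assoc] using cK.mul (cK.refl (o K.e)) ((btri K.p K.e).symm)
  have h1 : cK (o K.e * (o K.p * (o K.e * o K.p))) (o K.p * o K.p) := by simpa [kth, mul_assoc] using cK.mul ((btri K.e K.p)) (cK.refl (o K.p))
  have h2 : cK (o K.p * o K.p) (o K.p) := by simpa [kth, mul_assoc] using (bsq K.p)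
  exact ((h0).trans h1).trans h2

lemma lem_e_q : cK (o K.e * o K.q) (o K.q) := by
  have h0 : cK (o K.e * o K.q) (o K.e * (o K.q * (o K.e * o K.q))) := by simpa [kth, mul_assoc] using cK.mul (cK.refl (o K.e)) ((btri K.q K.e).symm)
  have h1 : cK (o K.e * (o K.q * (o K.e * o K.q))) (o K.q * o K.q) := by simpa [kth, mul_assoc] using cK.mul ((btri K.e K.q)) (cK.refl (o K.q))
  have h2 : cK (o K.q * o K.q) (o K.q) := by simpa [kth, mul_assoc] using (bsq K.q)
  exact ((h0).trans h1).trans h2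

lemma lem_e_r : cK (o K.e * o K.r) (o K.e * o K.r) := cK.refl _

lemma lem_e_er : cK (o K.e * (o K.e * o K.r)) (o K.e * o K.r) := by
  have h0 : cK (o K.e * (o K.e * o K.r)) (o K.e * o K.r) := by simpa [kth, mul_assoc] using cK.mul ((bsq K.e)) (cK.refl (o K.r))
  exact h0

lemma lem_e_pq : cK (o K.e * (o K.p * o K.q)) (o K.p * o K.q) := by
  have h0 : cK (o K.e * (o K.p * o K.q)) (o K.e * (o K.p * (o K.e * (o K.p * o K.q)))) := by simpa [kth, mul_assoc] using cK.mul (cK.mul (cK.refl (o K.e)) ((btri K.p K.e).symm)) (cK.refl (o K.q))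
  have h1 : cK (o K.e * (o K.p * (o K.e * (o K.p * o K.q)))) (o K.p * (o K.p * o K.q)) := by simpa [kth, mul_assoc] using cK.mul ((btri K.e K.p)) (cK.refl (o K.p * o K.q))
  have h2 : cK (o K.p * (o K.p * o K.q)) (o K.p * o K.q) := by simpa [kth, mul_assoc] using cK.mul ((bsq K.p)) (cK.refl (o K.q))
  exact ((h0).trans h1).trans h2

lemma lem_e_pr : cK (o K.e * (o K.p * o K.r)) (o K.p * o K.r) := by
  have h0 : cK (o K.e * (o K.p * o K.r)) (o K.e * (o K.p * (o K.e * (o K.p * o K.r)))) := by simpa [kth, mul_assoc] using cK.mul (cK.mul (cK.refl (o K.e)) ((btri K.p K.e).symm)) (cK.refl (o K.r))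
  have h1 : cK (o K.e * (o K.p * (o K.e * (o K.p * o K.r)))) (o K.p * (o K.p * o K.r)) := by simpa [kth, mul_assoc] using cK.mul ((btri K.e K.p)) (cK.refl (o K.p * o K.r))
  have h2 : cK (o K.p * (o K.p * o K.r)) (o K.p * o K.r) := by simpa [kth, mul_assoc] using cK.mul ((bsq K.p)) (cK.refl (o K.r))
  exact ((h0).trans h1).trans h2

lemma lem_e_qp : cK (o K.e * (o K.q * o K.p)) (o K.q * o K.p) := by
  have h0 : cK (o K.e * (o K.q * o K.p)) (o K.e * (o K.q * (o K.e * (o K.q * o K.p)))) := by simpa [kth, mul_assoc] using cK.mul (cK.mul (cK.refl (o K.e)) ((btri K.q K.e).symm)) (cK.refl (o K.p))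
  have h1 : cK (o K.e * (o K.q * (o K.e * (o K.q * o K.p)))) (o K.q * (o K.q * o K.p)) := by simpa [kth, mul_assoc] using cK.mul ((btri K.e K.q)) (cK.refl (o K.q * o K.p))
  have h2 : cK (o K.q * (o K.q * o K.p)) (o K.q * o K.p) := by simpa [kth, mul_assoc] using cK.mul ((bsq K.q)) (cK.refl (o K.p))
  exact ((h0).trans h1).trans h2

lemma lem_e_re : cK (o K.e * (o K.r * o K.e)) (o K.q) := by
  have h0 : cK (o K.e * (o K.r * o K.e)) (o K.q) := by simpa [kth, mul_assoc] using (btri K.e K.r)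
  exact h0

lemma lem_e_rp : cK (o K.e * (o K.r * o K.p)) (o K.q * o K.p) := by
  have h0 : cK (o K.e * (o K.r * o K.p)) (o K.e * (o K.r * (o K.p * o K.p))) := by simpa [kth, mul_assoc] using cK.mul (cK.refl (o K.e * o K.r)) ((bsq K.p).symm)
  have h1 : cK (o K.e * (o K.r * (o K.p * o K.p))) (o K.e * (o K.r * (o K.e * (o K.p * (o K.e * o K.p))))) := by simpa [kth, mul_assoc] using cK.mul (cK.mul (cK.refl (o K.e * o K.r)) ((btri K.e K.p).symm)) (cK.refl (o K.p))
  have h2 : cK (o K.e * (o K.r * (o K.e * (o K.p * (o K.e * o K.p))))) (o K.e * (o K.r * (o K.e * o K.p))) := by simpa [kth, mul_assoc] using cK.mul (cK.refl (o K.e * (o K.r * o K.e))) ((btri K.p K.e))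
  have h3 : cK (o K.e * (o K.r * (o K.e * o K.p))) (o K.q * o K.p) := by simpa [kth, mul_assoc] using cK.mul ((btri K.e K.r)) (cK.refl (o K.p))
  exact (((h0).trans h1).trans h2).trans h3

def rep : S10 → FreeSemigroup K
  | .s0 => o K.e
  | .s1 => o K.p
  | .s2 => o K.q
  | .s3 => o K.r
  | .s4 => o K.e * o K.r
  | .s5 => o K.p * o K.q
  | .s6 => o K.p * o K.r
  | .s7 => o K.q * o K.p
  | .s8 => o K.r * o K.e
  | .s9 => o K.r * o K.p

lemma step_left : ∀ (x : K) (i : S10), cK (o x * rep i) (rep (sgen x * i))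
  | K.p, .s0 => lem_p_e
  | K.p, .s1 => lem_p_p
  | K.p, .s2 => lem_p_q
  | K.p, .s3 => lem_p_r
  | K.p, .s4 => lem_p_er
  | K.p, .s5 => lem_p_pq
  | K.p, .s6 => lem_p_pr
  | K.p, .s7 => lem_p_qp
  | K.p, .s8 => lem_p_re
  | K.p, .s9 => lem_p_rp
  | K.q, .s0 => lem_q_e
  | K.q, .s1 => lem_q_p
  | K.q, .s2 => lem_q_q
  | K.q, .s3 => lem_q_r
  | K.q, .s4 => lem_q_er
  | K.q, .s5 => lem_q_pq
  | K.q, .s6 => lem_q_pr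
  | K.q, .s7 => lem_q_qp
  | K.q, .s8 => lem_q_re
  | K.q, .s9 => lem_q_rp
  | K.r, .s0 => lem_r_e
  | K.r, .s1 => lem_r_p
  | K.r, .s2 => lem_r_q
  | K.r, .s3 => lem_r_r
  | K.r, .s4 => lem_r_er
  | K.r, .s5 => lem_r_pq
  | K.r, .s6 => lem_r_pr
  | K.r, .s7 => lem_r_qp
  | K.r, .s8 => lem_r_re
  | K.r, .s9 => lem_r_rp
  | K.e, .s0 => lem_e_e
  | K.e, .s1 => lem_e_p
  | K.e, .s2 => lem_e_q
  | K.e, .s3 => lem_e_r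
  | K.e, .s4 => lem_e_er
  | K.e, .s5 => lem_e_pq
  | K.e, .s6 => lem_e_pr
  | K.e, .s7 => lem_e_qp
  | K.e, .s8 => lem_e_re
  | K.e, .s9 => lem_e_rp

lemma rep_sgen (x : K) : rep (sgen x) = o x := by cases x <;> rfl

lemma surj_rep (w : FreeSemigroup K) : ∃ i : S10, cK w (rep i) := by
  induction w using FreeSemigroup.recOnMul with
  | ih1 x => exact ⟨sgen x, by rw [rep_sgen]; exact cK.refl _⟩
  | ih2 x y _ ih =>
    obtain ⟨j, hj⟩ := ih
    exact ⟨sgen x * j, (cK.mul (cK.refl (o x)) hj).trans (step_left x j)⟩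

lemma fS_rel : ∀ u v, PGrel KinyonAlgebra u v → fS u = fS v := by
  rintro u v (⟨p, rfl, rfl⟩ | ⟨p, q, rfl, rfl⟩ | ⟨p, q, rfl, rfl⟩) <;>
    simp only [map_mul, fS, FreeSemigroup.lift_of] <;>
    first
      | (cases p <;> rfl)
      | (cases p <;> cases q <;> rfl)

lemma cK_le_ker : cK ≤ Con.ker fS :=
  Con.conGen_le.mpr fS_rel

lemma fS_rep : ∀ i : S10, fS (rep i) = i := by decide

end Stmt17Aux

/-- The quotient of the free semigroup on `X_{P'} = {x_s : s ∈ P'}` by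
the congruence generated by `x_s² = x_s`, `(x_s x_t)² = x_s x_t`,
`x_s x_t x_s = x_{tθ_s}`, where `P'` is Kinyon's four-element projection algebra,
has exactly 10 elements. -/
theorem stmt17 : Nat.card (conGen (PGrel KinyonAlgebra)).Quotient = 10 := by
  have hF : Function.Bijective (fun i : S10 => ((rep i : FreeSemigroup K) : cK.Quotient)) := by
    constructor
    · intro i j hij
      have h1 : cK (rep i) (rep j) := cK.eq.mp hij
      have h2 : fS (rep i) = fS (rep j) := Con.le_def.mp cK_le_ker h1
      rwa [fS_rep, fS_rep] at h2
    · intro z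
      obtain ⟨w, rfl⟩ := @Quotient.exists_rep _ cK.toSetoid z
      obtain ⟨i, hi⟩ := surj_rep w
      exact ⟨i, (cK.eq.mpr hi.symm : _)⟩
  have := Nat.card_eq_of_bijective _ hF
  rw [← this, Nat.card_eq_fintype_card]
  rfl
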